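/- arXiv:2510.22316 — 2 statements merged into one kernel-verified Lean document; each statement's English description precedes it below -/
import Mathlib

section
/- As a corollary of the reachability theorem: for a directed graph index G and query q with distinct distances, greedy beam search with query q, entry point N_{i,q}, and result-list size L ≥ EH(N_{i,q}, N_{j,q}, q, G) always visits N_{j,q}, where EH(u,v,q,G) = min over directed paths p from u to v in G of the maximum rank (with respect to distance to q) of a vertex on p. -/
attribute [local instance] Classical.propDecidable

/-- The state of greedy beam search (Algorithm 1): the set `C` of unexpanded
candidates, the result set `R`, and the set of visited vertices. -/
structure SState (V : Type*) where
  C : Finset V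
  R : Finset V
  visited : Finset V

variable {V : Type*} [Fintype V] [DecidableEq V]

/-- `rank dist x = i` means `x` is the `i`-th nearest vertex to the query
(with respect to the distance-to-query function `dist`), i.e. `F_{x,q} = i`. -/
noncomputable def rank (dist : V → ℝ) (x : V) : ℕ :=
  (Finset.univ.filter fun y => dist y ≤ dist x).card

/-- Keep only the `L` closest (to the query) elements of `R`. -/
noncomputable def truncate (dist : V → ℝ) (L : ℕ) (R : Finset V) : Finset V :=
  R.filter fun x => (R.filter fun y => dist y ≤ dist x).card ≤ L

/-- An element of `C` closest to the query. -/
noncomputable def argmin (dist : V → ℝ) (C : Finset V) (h : C.Nonempty) : V :=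
  (C.exists_min_image dist h).choose

/-- Insertion condition of Algorithm 1: `|R| < L` or `δ(v,q) < d_max`. -/
def insertCond (dist : V → ℝ) (L : ℕ) (R : Finset V) (v : V) : Prop :=
  R.card < L ∨ ∃ x ∈ R, dist v < dist x

/-- Inner loop of Algorithm 1: process the (unvisited) neighbors of the popped
vertex one by one, inserting them into `C` and `R` and truncating `R` to its
`L` closest elements. -/
noncomputable def insertLoop (dist : V → ℝ) (L : ℕ) : List V → SState V → SState V
  | [], s => s
  | v :: vs, s =>
    insertLoop dist L vs <|
      if v ∈ s.visited then s
      else if insertCond dist L s.R v then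
        ⟨insert v s.C, truncate dist L (insert v s.R), insert v s.visited⟩
      else ⟨s.C, s.R, insert v s.visited⟩

/-- Main loop of Algorithm 1 (greedy beam search) with explicit fuel.
At each step the closest unexpanded candidate `u` is popped; the loop breaks if
`δ(u,q) > d_max` (i.e. every element of the nonempty `R` is strictly closer
than `u`), and otherwise expands `u`. -/
noncomputable def gloop (Adj : V → V → Prop) (dist : V → ℝ) (L : ℕ) :
    ℕ → SState V → SState V
  | 0, s => s
  | n + 1, s =>
    if hC : s.C.Nonempty then
      let u := argmin dist s.C hC
      if s.R.Nonempty ∧ ∀ x ∈ s.R, dist x < dist u then s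
      else
        gloop Adj dist L n
          (insertLoop dist L ((Finset.univ.filter fun v => Adj u v).toList)
            ⟨s.C.erase u, s.R, s.visited⟩)
    else s

/-- Greedy beam search on the graph `Adj` with distance-to-query `dist`,
result-list size `L` and entry point `ep`. -/
noncomputable def search (Adj : V → V → Prop) (dist : V → ℝ) (L : ℕ) (ep : V) : SState V :=
  gloop Adj dist L (Fintype.card V + 1) ⟨{ep}, {ep}, {ep}⟩

/-- Adjacency of `NG_{S,q}`, the subgraph of `Adj` induced by the `S` nearest
vertices to the query. -/
def AdjS (Adj : V → V → Prop) (dist : V → ℝ) (S : ℕ) (a b : V) : Prop :=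
  Adj a b ∧ rank dist a ≤ S ∧ rank dist b ≤ S

/-- `p` is a directed path from `u` to `v` in the graph `Adj`. -/
def IsPathFrom (Adj : V → V → Prop) (u v : V) (p : List V) : Prop :=
  p.head? = some u ∧ p.getLast? = some v ∧ p.Chain' Adj

/-- Escape Hardness `EH(u,v,q,G)`: the minimum, over directed paths `p` from
`u` to `v` in `G`, of the maximum rank (w.r.t. distance to the query) of a
vertex on `p`; it is `⊤` (infinity) if `v` is unreachable from `u`. -/
noncomputable def EH (Adj : V → V → Prop) (rk : V → ℕ) (u v : V) : ℕ∞ :=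
  sInf {n : ℕ∞ | ∃ p : List V, IsPathFrom Adj u v p ∧ n = ((p.map rk).foldr max 0 : ℕ)}

/-- Invariant of greedy beam search. -/
structure SearchInv (dist : V → ℝ) (L : ℕ) (s : SState V) : Prop where
  hRv : s.R ⊆ s.visited
  hCv : s.C ⊆ s.visited
  hI2 : ∀ x ∈ s.visited, rank dist x ≤ L → x ∈ s.R

lemma rank_gt_of_not_insertCond (dist : V → ℝ) (L : ℕ) (R : Finset V) (v : V)
    (hv : v ∉ R) (h : ¬ insertCond dist L R v) : L < rank dist v := by
  rw [insertCond, not_or] at h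
  push_neg at h
  obtain ⟨h1, h2⟩ := h
  have hsub : insert v R ⊆ Finset.univ.filter fun y => dist y ≤ dist v := by
    intro x hx
    rcases Finset.mem_insert.mp hx with rfl | hx
    · simp
    · simp [h2 x hx]
  have hc := Finset.card_le_card hsub
  rw [Finset.card_insert_of_notMem hv] at hc
  unfold rank
  omega

lemma mem_truncate_of_rank_le (dist : V → ℝ) (L : ℕ) (R : Finset V) (x : V)
    (hx : x ∈ R) (h : rank dist x ≤ L) : x ∈ truncate dist L R := by
  refine Finset.mem_filter.mpr ⟨hx, le_trans (Finset.card_le_card ?_) h⟩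
  intro y hy
  simp only [Finset.mem_filter] at hy ⊢
  exact ⟨Finset.mem_univ _, hy.2⟩

lemma insertLoop_spec (Adj : V → V → Prop) (dist : V → ℝ) (L : ℕ) :
    ∀ (l : List V) (s : SState V), SearchInv dist L s →
    (∀ x ∈ s.visited, rank dist x ≤ L → x ∉ s.C → ∀ y, Adj x y →
      y ∈ s.visited ∨ y ∈ l) →
    SearchInv dist L (insertLoop dist L l s) ∧
    s.visited ⊆ (insertLoop dist L l s).visited ∧
    (s.visited \ s.C ⊆ (insertLoop dist L l s).visited \ (insertLoop dist L l s).C) ∧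
    (∀ x ∈ (insertLoop dist L l s).visited, rank dist x ≤ L →
      x ∉ (insertLoop dist L l s).C → ∀ y, Adj x y → y ∈ (insertLoop dist L l s).visited) := by
  intro l
  induction l with
  | nil =>
    intro s hInv h3
    rw [insertLoop]
    refine ⟨hInv, subset_rfl, subset_rfl, ?_⟩
    intro x hx hr hc y hadj
    rcases h3 x hx hr hc y hadj with h | h
    · exact h
    · simp at h
  | cons v vs ih =>
    intro s hInv h3
    rw [insertLoop]
    split_ifs with h1 h2
    · -- v already visited
      refine ih s hInv ?_
      intro x hx hr hc y hadj
      rcases h3 x hx hr hc y hadj with h | h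
      · exact Or.inl h
      · rcases List.mem_cons.mp h with rfl | h
        · exact Or.inl h1
        · exact Or.inr h
    · -- inserted into C, R, visited
      set s1 : SState V := ⟨insert v s.C, truncate dist L (insert v s.R), insert v s.visited⟩
        with hs1
      have hInv1 : SearchInv dist L s1 := by
        constructor
        · intro x hx
          have : x ∈ insert v s.R := Finset.filter_subset _ _ hx
          rcases Finset.mem_insert.mp this with rfl | hx'
          · exact Finset.mem_insert_self _ _
          · exact Finset.mem_insert_of_mem (hInv.hRv hx')
        · intro x hx
          rcases Finset.mem_insert.mp hx with rfl | hx'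
          · exact Finset.mem_insert_self _ _
          · exact Finset.mem_insert_of_mem (hInv.hCv hx')
        · intro x hx hr
          have hxR : x ∈ insert v s.R := by
            rcases Finset.mem_insert.mp hx with rfl | hx'
            · exact Finset.mem_insert_self _ _
            · exact Finset.mem_insert_of_mem (hInv.hI2 x hx' hr)
          exact mem_truncate_of_rank_le dist L _ x hxR hr
      have h31 : ∀ x ∈ s1.visited, rank dist x ≤ L → x ∉ s1.C → ∀ y, Adj x y →
          y ∈ s1.visited ∨ y ∈ vs := by
        intro x hx hr hc y hadj
        have hxv : x ≠ v := by
          rintro rfl; exact hc (Finset.mem_insert_self _ _)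
        have hx' : x ∈ s.visited := by
          rcases Finset.mem_insert.mp hx with rfl | hx'
          · exact absurd rfl hxv
          · exact hx'
        have hc' : x ∉ s.C := fun h => hc (Finset.mem_insert_of_mem h)
        rcases h3 x hx' hr hc' y hadj with h | h
        · exact Or.inl (Finset.mem_insert_of_mem h)
        · rcases List.mem_cons.mp h with rfl | h
          · exact Or.inl (Finset.mem_insert_self _ _)
          · exact Or.inr h
      obtain ⟨hA, hB, hC, hD⟩ := ih s1 hInv1 h31
      refine ⟨hA, subset_trans (Finset.subset_insert _ _) hB, ?_, hD⟩
      refine subset_trans ?_ hC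
      intro x hx
      rw [Finset.mem_sdiff] at hx ⊢
      refine ⟨Finset.mem_insert_of_mem hx.1, ?_⟩
      intro hxC
      rcases Finset.mem_insert.mp hxC with rfl | h
      · exact h1 hx.1
      · exact hx.2 h
    · -- insertCond fails: only visited grows
      set s1 : SState V := ⟨s.C, s.R, insert v s.visited⟩ with hs1
      have hrv : L < rank dist v :=
        rank_gt_of_not_insertCond dist L s.R v (fun h => h1 (hInv.hRv h)) h2
      have hInv1 : SearchInv dist L s1 := by
        constructor
        · exact subset_trans hInv.hRv (Finset.subset_insert _ _)
        · exact subset_trans hInv.hCv (Finset.subset_insert _ _)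
        · intro x hx hr
          rcases Finset.mem_insert.mp hx with rfl | hx'
          · omega
          · exact hInv.hI2 x hx' hr
      have h31 : ∀ x ∈ s1.visited, rank dist x ≤ L → x ∉ s1.C → ∀ y, Adj x y →
          y ∈ s1.visited ∨ y ∈ vs := by
        intro x hx hr hc y hadj
        have hx' : x ∈ s.visited := by
          rcases Finset.mem_insert.mp hx with rfl | hx'
          · omega
          · exact hx'
        rcases h3 x hx' hr hc y hadj with h | h
        · exact Or.inl (Finset.mem_insert_of_mem h)
        · rcases List.mem_cons.mp h with rfl | h
          · exact Or.inl (Finset.mem_insert_self _ _)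
          · exact Or.inr h
      obtain ⟨hA, hB, hC, hD⟩ := ih s1 hInv1 h31
      refine ⟨hA, subset_trans (Finset.subset_insert _ _) hB, ?_, hD⟩
      refine subset_trans ?_ hC
      intro x hx
      rw [Finset.mem_sdiff] at hx ⊢
      exact ⟨Finset.mem_insert_of_mem hx.1, hx.2⟩

lemma gloop_spec (Adj : V → V → Prop) (dist : V → ℝ) (L : ℕ) :
    ∀ (n : ℕ) (s : SState V), SearchInv dist L s →
    (∀ x ∈ s.visited, rank dist x ≤ L → x ∉ s.C → ∀ y, Adj x y → y ∈ s.visited) →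
    Fintype.card V ≤ n + (s.visited \ s.C).card →
    SearchInv dist L (gloop Adj dist L n s) ∧
    s.visited ⊆ (gloop Adj dist L n s).visited ∧
    (∀ x ∈ (gloop Adj dist L n s).visited, rank dist x ≤ L →
      x ∉ (gloop Adj dist L n s).C → ∀ y, Adj x y → y ∈ (gloop Adj dist L n s).visited) ∧
    (∀ w ∈ (gloop Adj dist L n s).C, w ∉ (gloop Adj dist L n s).R) := by
  intro n
  induction n with
  | zero =>
    intro s hInv h3 hcard
    rw [gloop]
    refine ⟨hInv, subset_rfl, h3, ?_⟩
    have hdiff : s.visited \ s.C = Finset.univ := by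
      apply Finset.eq_univ_of_card
      have := Finset.card_le_univ (s.visited \ s.C)
      simp at hcard
      omega
    intro w hw
    have : w ∈ s.visited \ s.C := hdiff ▸ Finset.mem_univ w
    exact absurd hw (Finset.mem_sdiff.mp this).2
  | succ n ih =>
    intro s hInv h3 hcard
    simp only [gloop]
    split_ifs with hC hbrk
    · -- break condition: every element of R is strictly closer than argmin
      refine ⟨hInv, subset_rfl, h3, ?_⟩
      intro w hwC hwR
      have hspec := (s.C.exists_min_image dist hC).choose_spec
      have h1 : dist (argmin dist s.C hC) ≤ dist w := hspec.2 w hwC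
      have h2 : dist w < dist (argmin dist s.C hC) := hbrk.2 w hwR
      exact absurd (lt_of_lt_of_le h2 h1) (lt_irrefl _)
    · -- expand u
      set u := argmin dist s.C hC with hu
      have huC : u ∈ s.C := (s.C.exists_min_image dist hC).choose_spec.1
      set smid : SState V := ⟨s.C.erase u, s.R, s.visited⟩ with hsmid
      have hInvmid : SearchInv dist L smid := by
        refine ⟨hInv.hRv, subset_trans (Finset.erase_subset _ _) hInv.hCv, hInv.hI2⟩
      set l := (Finset.univ.filter fun v => Adj u v).toList with hl
      have h3mid : ∀ x ∈ smid.visited, rank dist x ≤ L → x ∉ smid.C → ∀ y, Adj x y →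
          y ∈ smid.visited ∨ y ∈ l := by
        intro x hx hr hc y hadj
        by_cases hxu : x = u
        · subst hxu
          right
          rw [hl, Finset.mem_toList, Finset.mem_filter]
          exact ⟨Finset.mem_univ _, hadj⟩
        · have hc' : x ∉ s.C := by
            intro h
            exact hc (Finset.mem_erase.mpr ⟨hxu, h⟩)
          exact Or.inl (h3 x hx hr hc' y hadj)
      obtain ⟨hA, hB, hCC, hD⟩ := insertLoop_spec Adj dist L l smid hInvmid h3mid
      set s' := insertLoop dist L l smid with hs'
      have hsub : insert u (s.visited \ s.C) ⊆ s'.visited \ s'.C := by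
        refine subset_trans ?_ hCC
        intro x hx
        rcases Finset.mem_insert.mp hx with rfl | hx'
        · exact Finset.mem_sdiff.mpr ⟨hInv.hCv huC, Finset.notMem_erase _ _⟩
        · rw [Finset.mem_sdiff] at hx' ⊢
          exact ⟨hx'.1, fun h => hx'.2 (Finset.erase_subset _ _ h)⟩
      have hcard' : Fintype.card V ≤ n + (s'.visited \ s'.C).card := by
        have h1 : (insert u (s.visited \ s.C)).card = (s.visited \ s.C).card + 1 := by
          rw [Finset.card_insert_of_notMem]
          intro h
          exact (Finset.mem_sdiff.mp h).2 huC
        have h2 := Finset.card_le_card hsub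
        omega
      obtain ⟨hA', hB', hC', hD'⟩ := ih s' hA hD hcard'
      exact ⟨hA', subset_trans (subset_trans hB hB') (by rfl), hC', hD'⟩
    · -- C empty
      refine ⟨hInv, subset_rfl, h3, ?_⟩
      intro w hw
      exact absurd ⟨w, hw⟩ hC

lemma le_foldr_max (l : List ℕ) (a : ℕ) (h : a ∈ l) : a ≤ l.foldr max 0 := by
  induction l with
  | nil => cases h
  | cons b t ih =>
    rcases List.mem_cons.mp h with rfl | h
    · exact le_max_left _ _
    · exact le_trans (ih h) (le_max_right _ _)

lemma walk_visited (Adj : V → V → Prop) (dist : V → ℝ) (L : ℕ) (t : SState V)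
    (hI2 : ∀ x ∈ t.visited, rank dist x ≤ L → x ∈ t.R)
    (h3 : ∀ x ∈ t.visited, rank dist x ≤ L → x ∉ t.C → ∀ y, Adj x y → y ∈ t.visited)
    (hCR : ∀ w ∈ t.C, w ∉ t.R) :
    ∀ p : List V, p.Chain' Adj → (∀ x ∈ p, rank dist x ≤ L) →
      ∀ a, p.head? = some a → a ∈ t.visited →
      ∀ b, p.getLast? = some b → b ∈ t.visited := by
  intro p
  induction p with
  | nil => intro _ _ a ha; simp at ha
  | cons c q ih =>
    intro hchain hranks a ha hav b hb
    have hac : c = a := by simpa using ha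
    subst hac
    cases q with
    | nil =>
      have : c = b := by simpa using hb
      subst this; exact hav
    | cons d q' =>
      have hadj : Adj c d := (List.isChain_cons_cons.mp hchain).1
      have hchain' : List.Chain' Adj (d :: q') := (List.isChain_cons_cons.mp hchain).2
      have hrc : rank dist c ≤ L := hranks c List.mem_cons_self
      have hcR : c ∈ t.R := hI2 c hav hrc
      have hcC : c ∉ t.C := fun h => hCR c h hcR
      have hdv : d ∈ t.visited := h3 c hav hrc hcC d hadj
      have hb' : (d :: q').getLast? = some b := by
        rw [← hb]; rfl
      exact ih hchain' (fun x hx => hranks x (List.mem_cons_of_mem _ hx)) d rfl hdv b hb'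

/-- Greedy beam search with query `q`, entry point `N_{i,q}`
and result-list size `L ≥ EH(N_{i,q}, N_{j,q}, q, G)` always visits `N_{j,q}`. -/
theorem greedy_search_visits_of_EH_le
    (Adj : V → V → Prop) (dist : V → ℝ) (hinj : Function.Injective dist)
    (L : ℕ) (u v : V)
    (hEH : EH Adj (rank dist) u v ≤ (L : ℕ∞)) :
    v ∈ (search Adj dist L u).visited := by
  classical
  -- extract a path whose max rank is ≤ L
  obtain ⟨p, hp, hple⟩ :
      ∃ p : List V, IsPathFrom Adj u v p ∧ ((p.map (rank dist)).foldr max 0 : ℕ) ≤ L := by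
    by_contra hcon
    push_neg at hcon
    have hge : ((L + 1 : ℕ) : ℕ∞) ≤ EH Adj (rank dist) u v := by
      apply le_sInf
      rintro n ⟨p, hp, rfl⟩
      have := hcon p hp
      exact_mod_cast this
    have := le_trans hge hEH
    have : L + 1 ≤ L := by exact_mod_cast this
    omega
  obtain ⟨hhead, hlast, hchain⟩ := hp
  have hranks : ∀ x ∈ p, rank dist x ≤ L := by
    intro x hx
    exact le_trans (le_foldr_max _ _ (List.mem_map_of_mem (f := rank dist) hx)) hple
  -- rank of head is ≤ L, in particular the entry point has rank ≤ L
  have hup : u ∈ p := by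
    cases p with
    | nil => simp at hhead
    | cons a q => simp at hhead; subst hhead; exact List.mem_cons_self
  -- run the search
  have hInv0 : SearchInv dist L (⟨{u}, {u}, {u}⟩ : SState V) := by
    refine ⟨subset_rfl, subset_rfl, ?_⟩
    intro x hx _
    exact hx
  have h30 : ∀ x ∈ ({u} : Finset V), rank dist x ≤ L → x ∉ ({u} : Finset V) →
      ∀ y, Adj x y → y ∈ ({u} : Finset V) := by
    intro x hx _ hx'
    exact absurd hx hx'
  have hcard0 : Fintype.card V ≤ (Fintype.card V + 1) +
      ((({u} : Finset V)) \ ({u} : Finset V)).card := by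
    simp
  obtain ⟨hA, hB, hC, hD⟩ :=
    gloop_spec Adj dist L (Fintype.card V + 1) ⟨{u}, {u}, {u}⟩ hInv0 h30 hcard0
  have huv : u ∈ (search Adj dist L u).visited := hB (Finset.mem_singleton_self u)
  exact walk_visited Adj dist L (search Adj dist L u) hA.hI2 hC hD p hchain hranks
    u hhead huv v hlast
end

section
/- If every vertex of a finite directed graph G on the S nearest neighbors of q induces a strongly connected subgraph NG_{S,q}, then EH(N_{i,q}, N_{j,q}, q, G) ≤ S for all 1 ≤ i,j ≤ S; consequently greedy beam search with any entry point among these S vertices and L ≥ S visits all S nearest neighbors of q. -/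
attribute [local instance] Classical.propDecidable

variable {V : Type*} [Fintype V] [DecidableEq V]

/-! ### Auxiliary lemmas -/

lemma argmin_mem (dist : V → ℝ) (C : Finset V) (h : C.Nonempty) : argmin dist C h ∈ C :=
  (C.exists_min_image dist h).choose_spec.1

lemma argmin_le (dist : V → ℝ) (C : Finset V) (h : C.Nonempty) {b : V} (hb : b ∈ C) :
    dist (argmin dist C h) ≤ dist b :=
  (C.exists_min_image dist h).choose_spec.2 b hb

lemma truncate_subset (dist : V → ℝ) (L : ℕ) (R : Finset V) : truncate dist L R ⊆ R :=
  Finset.filter_subset _ _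

lemma truncate_eq_of_card_le {dist : V → ℝ} {L : ℕ} {R : Finset V} (h : R.card ≤ L) :
    truncate dist L R = R := by
  apply Finset.filter_true_of_mem
  intro x _
  exact le_trans (Finset.card_le_card (Finset.filter_subset _ _)) h

lemma rIn_lt_of_dist_lt {dist : V → ℝ} {R : Finset V} {x y : V} (hy : y ∈ R)
    (hxy : dist x < dist y) :
    (R.filter fun z => dist z ≤ dist x).card < (R.filter fun z => dist z ≤ dist y).card := by
  apply Finset.card_lt_card
  rw [Finset.ssubset_iff_of_subset]
  · exact ⟨y, Finset.mem_filter.mpr ⟨hy, le_refl _⟩,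
      fun h => absurd (Finset.mem_filter.mp h).2 (not_le.mpr hxy)⟩
  · intro z hz
    obtain ⟨hz1, hz2⟩ := Finset.mem_filter.mp hz
    exact Finset.mem_filter.mpr ⟨hz1, le_trans hz2 (le_of_lt hxy)⟩

lemma min_le_card_truncate {dist : V → ℝ} (hinj : Function.Injective dist)
    (L : ℕ) (R : Finset V) : min L R.card ≤ (truncate dist L R).card := by
  rcases le_or_gt R.card L with h | h
  · rw [truncate_eq_of_card_le h]
    exact min_le_right _ _
  · have hinjOn : ∀ x ∈ R, ∀ y ∈ R,
        (R.filter fun z => dist z ≤ dist x).card = (R.filter fun z => dist z ≤ dist y).card →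
        x = y := by
      intro x hx y hy hxy
      rcases lt_trichotomy (dist x) (dist y) with hlt | heq | hgt
      · exact absurd hxy (ne_of_lt (rIn_lt_of_dist_lt hy hlt))
      · exact hinj heq
      · exact absurd hxy.symm (ne_of_lt (rIn_lt_of_dist_lt hx hgt))
    have hB : (R.filter fun x => ¬ (R.filter fun y => dist y ≤ dist x).card ≤ L).card
        ≤ R.card - L := by
      have := Finset.card_le_card_of_injOn
        (s := R.filter fun x => ¬ (R.filter fun y => dist y ≤ dist x).card ≤ L)
        (f := fun x => (R.filter fun y => dist y ≤ dist x).card)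
        (t := Finset.Icc (L + 1) R.card)
        (fun x hx => by
          obtain ⟨hx1, hx2⟩ := Finset.mem_filter.mp hx
          exact Finset.mem_Icc.mpr ⟨by show L + 1 ≤ (R.filter fun y => dist y ≤ dist x).card; omega,
            Finset.card_le_card (Finset.filter_subset _ _)⟩)
        (fun x hx y hy hxy =>
          hinjOn x (Finset.filter_subset _ _ hx) y (Finset.filter_subset _ _ hy) hxy)
      rw [Nat.card_Icc] at this
      omega
    have hsum : (R.filter fun x => (R.filter fun y => dist y ≤ dist x).card ≤ L).card
        + (R.filter fun x => ¬ (R.filter fun y => dist y ≤ dist x).card ≤ L).card = R.card :=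
      Finset.card_filter_add_card_filter_not _
    unfold truncate
    omega

/-- Measure for termination of `gloop`. -/
noncomputable def meas (s : SState V) : ℕ := (Finset.univ \ s.visited).card + s.C.card

lemma insertLoop_visited_mono (dist : V → ℝ) (L : ℕ) :
    ∀ (l : List V) (s : SState V), s.visited ⊆ (insertLoop dist L l s).visited := by
  intro l
  induction l with
  | nil => intro s; exact subset_rfl
  | cons v vs ih =>
    intro s
    simp only [insertLoop]
    split_ifs with h1 h2
    · exact ih s
    · exact fun x hx => ih _ (Finset.mem_insert_of_mem hx)
    · exact fun x hx => ih _ (Finset.mem_insert_of_mem hx)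

lemma insertLoop_meas_le (dist : V → ℝ) (L : ℕ) :
    ∀ (l : List V) (s : SState V), meas (insertLoop dist L l s) ≤ meas s := by
  intro l
  induction l with
  | nil => intro s; exact le_refl _
  | cons v vs ih =>
    intro s
    simp only [insertLoop]
    split_ifs with h1 h2
    · exact ih s
    · refine le_trans (ih _) ?_
      show (Finset.univ \ insert v s.visited).card + (insert v s.C).card ≤ meas s
      have hv : v ∈ Finset.univ \ s.visited := by
        simp only [Finset.mem_sdiff, Finset.mem_univ, true_and]; exact h1
      have e1 : (Finset.univ \ insert v s.visited).card
          = (Finset.univ \ s.visited).card - 1 := by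
        rw [Finset.sdiff_insert, Finset.card_erase_of_mem hv]
      have e2 : (insert v s.C).card ≤ s.C.card + 1 := Finset.card_insert_le _ _
      have e3 : 1 ≤ (Finset.univ \ s.visited).card := Finset.card_pos.mpr ⟨v, hv⟩
      unfold meas
      omega
    · refine le_trans (ih _) ?_
      show (Finset.univ \ insert v s.visited).card + s.C.card ≤ meas s
      have hv : v ∈ Finset.univ \ s.visited := by
        simp only [Finset.mem_sdiff, Finset.mem_univ, true_and]; exact h1
      have e1 : (Finset.univ \ insert v s.visited).card
          = (Finset.univ \ s.visited).card - 1 := by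
        rw [Finset.sdiff_insert, Finset.card_erase_of_mem hv]
      unfold meas
      omega

lemma insertLoop_inv (Adj : V → V → Prop) (dist : V → ℝ) (hinj : Function.Injective dist)
    (L S : ℕ) (hSL : S ≤ L) :
    ∀ (l : List V) (s : SState V),
      s.R ⊆ s.visited →
      min L s.visited.card ≤ s.R.card →
      (∀ a ∈ s.visited, rank dist a ≤ S → a ∈ s.C ∨ ∀ w, Adj a w → w ∈ s.visited ∨ w ∈ l) →
      (insertLoop dist L l s).R ⊆ (insertLoop dist L l s).visited ∧
        min L (insertLoop dist L l s).visited.card ≤ (insertLoop dist L l s).R.card ∧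
        ∀ a ∈ (insertLoop dist L l s).visited, rank dist a ≤ S →
          a ∈ (insertLoop dist L l s).C ∨ ∀ w, Adj a w → w ∈ (insertLoop dist L l s).visited := by
  intro l
  induction l with
  | nil =>
    intro s h1 h2 h3
    refine ⟨h1, h2, fun a ha hr => ?_⟩
    rcases h3 a ha hr with h | h
    · exact Or.inl h
    · exact Or.inr fun w hw => (h w hw).resolve_right (by simp)
  | cons v vs ih =>
    intro s h1 h2 h3
    simp only [insertLoop]
    split_ifs with hv hc
    · -- v already visited
      apply ih s h1 h2
      intro a ha hr
      rcases h3 a ha hr with h | h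
      · exact Or.inl h
      · refine Or.inr fun w hw => ?_
        rcases h w hw with h' | h'
        · exact Or.inl h'
        · rcases List.mem_cons.mp h' with rfl | h''
          · exact Or.inl hv
          · exact Or.inr h''
    · -- insert v
      have hvR : v ∉ s.R := fun h => hv (h1 h)
      apply ih
      · intro x hx
        have hx' := truncate_subset dist L (insert v s.R) hx
        rcases Finset.mem_insert.mp hx' with rfl | hx''
        · exact Finset.mem_insert_self _ _
        · exact Finset.mem_insert_of_mem (h1 hx'')
      · show min L (insert v s.visited).card ≤ (truncate dist L (insert v s.R)).card
        have k1 := min_le_card_truncate hinj L (insert v s.R)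
        rw [Finset.card_insert_of_notMem hvR] at k1
        rw [Finset.card_insert_of_notMem hv]
        omega
      · intro a ha hr
        rcases Finset.mem_insert.mp ha with rfl | ha'
        · exact Or.inl (Finset.mem_insert_self _ _)
        · rcases h3 a ha' hr with h | h
          · exact Or.inl (Finset.mem_insert_of_mem h)
          · refine Or.inr fun w hw => ?_
            rcases h w hw with h' | h'
            · exact Or.inl (Finset.mem_insert_of_mem h')
            · rcases List.mem_cons.mp h' with rfl | h''
              · exact Or.inl (Finset.mem_insert_self _ _)
              · exact Or.inr h''
    · -- no insert
      have hc' : L ≤ s.R.card ∧ ∀ x ∈ s.R, dist x ≤ dist v := by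
        unfold insertCond at hc
        push_neg at hc
        exact ⟨hc.1, hc.2⟩
      apply ih
      · exact fun x hx => Finset.mem_insert_of_mem (h1 hx)
      · exact le_trans (min_le_left _ _) hc'.1
      · intro a ha hr
        rcases Finset.mem_insert.mp ha with rfl | ha'
        · exfalso
          have hvR : a ∉ s.R := fun h => hv (h1 h)
          have hsub : insert a s.R ⊆ Finset.univ.filter fun y => dist y ≤ dist a := by
            intro x hx
            simp only [Finset.mem_filter, Finset.mem_univ, true_and]
            rcases Finset.mem_insert.mp hx with rfl | hx'
            · exact le_refl _
            · exact hc'.2 x hx'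
          have hcard := Finset.card_le_card hsub
          rw [Finset.card_insert_of_notMem hvR] at hcard
          unfold rank at hr
          omega
        · rcases h3 a ha' hr with h | h
          · exact Or.inl h
          · refine Or.inr fun w hw => ?_
            rcases h w hw with h' | h'
            · exact Or.inl (Finset.mem_insert_of_mem h')
            · rcases List.mem_cons.mp h' with rfl | h''
              · exact Or.inl (Finset.mem_insert_self _ _)
              · exact Or.inr h''

lemma gloop_succ (Adj : V → V → Prop) (dist : V → ℝ) (L n : ℕ) (s : SState V) :
    gloop Adj dist L (n + 1) s =
      if hC : s.C.Nonempty then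
        if s.R.Nonempty ∧ ∀ x ∈ s.R, dist x < dist (argmin dist s.C hC) then s
        else
          gloop Adj dist L n
            (insertLoop dist L
              ((Finset.univ.filter fun v => Adj (argmin dist s.C hC) v).toList)
              ⟨s.C.erase (argmin dist s.C hC), s.R, s.visited⟩)
      else s := by
  rw [gloop]

/-- Terminal condition of `gloop`. -/
def Final (dist : V → ℝ) (s : SState V) : Prop :=
  ∀ hC : s.C.Nonempty, s.R.Nonempty ∧ ∀ x ∈ s.R, dist x < dist (argmin dist s.C hC)

lemma gloop_final (Adj : V → V → Prop) (dist : V → ℝ) (L : ℕ) :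
    ∀ (n : ℕ) (s : SState V), meas s < n → Final dist (gloop Adj dist L n s) := by
  intro n
  induction n with
  | zero => intro s h; exact absurd h (Nat.not_lt_zero _)
  | succ n ih =>
    intro s hm
    rw [gloop_succ]
    split_ifs with hC hbrk
    · intro hC'
      exact hbrk
    · apply ih
      have h1 : meas (insertLoop dist L
            ((Finset.univ.filter fun v => Adj (argmin dist s.C hC) v).toList)
            ⟨s.C.erase (argmin dist s.C hC), s.R, s.visited⟩)
          ≤ (Finset.univ \ s.visited).card + (s.C.erase (argmin dist s.C hC)).card :=
        insertLoop_meas_le dist L _ _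
      have h2 : (s.C.erase (argmin dist s.C hC)).card < s.C.card :=
        Finset.card_erase_lt_of_mem (argmin_mem dist s.C hC)
      have hm' : (Finset.univ \ s.visited).card + s.C.card < n + 1 := hm
      omega
    · intro hC'
      exact absurd hC' hC

/-- The invariant maintained by the main loop. -/
def GInv (Adj : V → V → Prop) (dist : V → ℝ) (L S : ℕ) (s : SState V) : Prop :=
  s.R ⊆ s.visited ∧ min L s.visited.card ≤ s.R.card ∧
    ∀ a ∈ s.visited, rank dist a ≤ S → a ∈ s.C ∨ ∀ w, Adj a w → w ∈ s.visited

lemma gloop_inv (Adj : V → V → Prop) (dist : V → ℝ) (hinj : Function.Injective dist)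
    (L S : ℕ) (hSL : S ≤ L) :
    ∀ (n : ℕ) (s : SState V), GInv Adj dist L S s →
      GInv Adj dist L S (gloop Adj dist L n s) ∧
        s.visited ⊆ (gloop Adj dist L n s).visited := by
  intro n
  induction n with
  | zero => intro s h; exact ⟨h, subset_rfl⟩
  | succ n ih =>
    intro s h
    rw [gloop_succ]
    split_ifs with hC hbrk
    · exact ⟨h, subset_rfl⟩
    · set u := argmin dist s.C hC with hu
      set l := (Finset.univ.filter fun v => Adj u v).toList with hl
      obtain ⟨h1, h2, h3⟩ := h
      have hpre : ∀ a ∈ (⟨s.C.erase u, s.R, s.visited⟩ : SState V).visited,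
          rank dist a ≤ S →
          a ∈ (⟨s.C.erase u, s.R, s.visited⟩ : SState V).C ∨
            ∀ w, Adj a w →
              w ∈ (⟨s.C.erase u, s.R, s.visited⟩ : SState V).visited ∨ w ∈ l := by
        intro a ha hr
        rcases h3 a ha hr with hC' | hnb
        · by_cases hau : a = u
          · subst hau
            refine Or.inr fun w hw => Or.inr ?_
            rw [hl]
            exact Finset.mem_toList.mpr (Finset.mem_filter.mpr ⟨Finset.mem_univ w, hw⟩)
          · exact Or.inl (Finset.mem_erase.mpr ⟨hau, hC'⟩)
        · exact Or.inr fun w hw => Or.inl (hnb w hw)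
      obtain ⟨i1, i2, i3⟩ := insertLoop_inv Adj dist hinj L S hSL l
        ⟨s.C.erase u, s.R, s.visited⟩ h1 h2 hpre
      obtain ⟨g1, g2⟩ := ih _ ⟨i1, i2, i3⟩
      refine ⟨g1, Finset.Subset.trans ?_ g2⟩
      exact insertLoop_visited_mono dist L l ⟨s.C.erase u, s.R, s.visited⟩
    · exact ⟨h, subset_rfl⟩

lemma foldr_max_le {S : ℕ} : ∀ {l : List ℕ}, (∀ x ∈ l, x ≤ S) → l.foldr max 0 ≤ S := by
  intro l
  induction l with
  | nil => intro _; simp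
  | cons a l ih =>
    intro h
    simp only [List.foldr_cons]
    exact max_le (h a (by simp)) (ih fun x hx => h x (by simp [hx]))

lemma exists_path (Adj : V → V → Prop) (dist : V → ℝ) (S : ℕ) {u v : V}
    (hu : rank dist u ≤ S) (h : Relation.ReflTransGen (AdjS Adj dist S) u v) :
    ∃ p : List V, IsPathFrom Adj u v p ∧ ∀ x ∈ p, rank dist x ≤ S := by
  induction h with
  | refl => exact ⟨[u], ⟨rfl, rfl, List.isChain_singleton u⟩, by simpa using hu⟩
  | @tail b c hab hbc ih =>
    obtain ⟨p, ⟨hh, hl, hch⟩, hrk⟩ := ih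
    refine ⟨p ++ [c], ⟨?_, ?_, ?_⟩, ?_⟩
    · cases p with
      | nil => simp at hh
      | cons x p' => simpa using hh
    · exact List.getLast?_concat
    · show List.IsChain Adj (p ++ [c]); rw [List.isChain_append]
      refine ⟨hch, List.isChain_singleton c, fun x hx y hy => ?_⟩
      rw [hl] at hx
      simp only [Option.mem_some_iff] at hx
      simp only [List.head?_cons, Option.mem_some_iff] at hy
      subst hx; subst hy
      exact hbc.1
    · intro x hx
      rcases List.mem_append.mp hx with hx' | hx'
      · exact hrk x hx'
      · rcases List.mem_singleton.mp hx' with rfl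
        exact hbc.2.2

/-- If the subgraph `NG_{S,q}` induced by the `S` nearest
neighbors of `q` is strongly connected, then `EH(N_{i,q}, N_{j,q}, q, G) ≤ S`
for all `1 ≤ i, j ≤ S`; consequently greedy beam search with any entry point
among these `S` vertices and `L ≥ S` visits all `S` nearest neighbors of `q`. -/
theorem strongly_connected_NG_EH_and_visits
    (Adj : V → V → Prop) (dist : V → ℝ) (hinj : Function.Injective dist)
    (S : ℕ)
    (hSC : ∀ u v : V, rank dist u ≤ S → rank dist v ≤ S →
      Relation.ReflTransGen (AdjS Adj dist S) u v) :
    (∀ u v : V, rank dist u ≤ S → rank dist v ≤ S →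
        EH Adj (rank dist) u v ≤ (S : ℕ∞)) ∧
      (∀ L : ℕ, S ≤ L → ∀ e : V, rank dist e ≤ S → ∀ v : V, rank dist v ≤ S →
        v ∈ (search Adj dist L e).visited) := by
  constructor
  · intro u v hu hv
    obtain ⟨p, hp, hrk⟩ := exists_path Adj dist S hu (hSC u v hu hv)
    refine le_trans (sInf_le ⟨p, hp, rfl⟩) ?_
    have : ((p.map (rank dist)).foldr max 0) ≤ S := by
      apply foldr_max_le
      intro x hx
      obtain ⟨y, hy, rfl⟩ := List.mem_map.mp hx
      exact hrk y hy
    exact_mod_cast this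
  · intro L hSL e he v hv
    have hInv0 : GInv Adj dist L S ⟨{e}, {e}, {e}⟩ := by
      refine ⟨subset_rfl, by simp, fun a ha _ => Or.inl (by simpa using ha)⟩
    obtain ⟨hInv, hmono⟩ := gloop_inv Adj dist hinj L S hSL (Fintype.card V + 1)
      ⟨{e}, {e}, {e}⟩ hInv0
    rw [show gloop Adj dist L (Fintype.card V + 1) (⟨{e}, {e}, {e}⟩ : SState V)
        = search Adj dist L e from rfl] at hInv hmono
    have hFin : Final dist (search Adj dist L e) := by
      apply gloop_final
      show (Finset.univ \ ({e} : Finset V)).card + ({e} : Finset V).card < Fintype.card V + 1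
      have h1 : (Finset.univ \ ({e} : Finset V)).card = Fintype.card V - 1 := by
        rw [Finset.card_sdiff_of_subset (Finset.subset_univ _)]
        simp [Finset.card_univ]
      have h2 : 1 ≤ Fintype.card V := Fintype.card_pos_iff.mpr ⟨e⟩
      simp only [h1, Finset.card_singleton]
      omega
    have key : ∀ w, Relation.ReflTransGen (AdjS Adj dist S) e w →
        w ∈ (search Adj dist L e).visited := by
      intro w hw
      induction hw with
      | refl => exact hmono (by simp)
      | @tail b c hab hbc ih =>
        obtain ⟨hRv, hmin, hinv4⟩ := hInv
        rcases hinv4 b ih hbc.2.1 with hC | hnb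
        · exfalso
          have hCne : (search Adj dist L e).C.Nonempty := ⟨b, hC⟩
          obtain ⟨hRne, hlt⟩ := hFin hCne
          have hua : dist (argmin dist (search Adj dist L e).C hCne) ≤ dist b :=
            argmin_le _ _ _ hC
          have hlt' : ∀ x ∈ (search Adj dist L e).R, dist x < dist b :=
            fun x hx => lt_of_lt_of_le (hlt x hx) hua
          have hbR : b ∉ (search Adj dist L e).R := fun h => lt_irrefl _ (hlt' b h)
          have hsub : insert b (search Adj dist L e).R ⊆
              Finset.univ.filter fun y => dist y ≤ dist b := by
            intro x hx
            simp only [Finset.mem_filter, Finset.mem_univ, true_and]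
            rcases Finset.mem_insert.mp hx with rfl | hx'
            · exact le_refl _
            · exact le_of_lt (hlt' x hx')
          have hcard := Finset.card_le_card hsub
          rw [Finset.card_insert_of_notMem hbR] at hcard
          have hrb : rank dist b ≤ S := hbc.2.1
          unfold rank at hrb
          by_cases hRS : S ≤ (search Adj dist L e).R.card
          · omega
          · have hvcard : (search Adj dist L e).visited.card ≤ (search Adj dist L e).R.card := by
              omega
            have hEq : (search Adj dist L e).R = (search Adj dist L e).visited :=
              Finset.eq_of_subset_of_card_le hRv hvcard
            rw [hEq] at hlt'
            exact lt_irrefl _ (hlt' b ih)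
        · exact hnb c hbc.1
    exact key v (hSC e v he hv)
end
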